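/- With notation as above, for every α ∈ ℝ^k, αᵀ U_n U_nᵀ α → ‖α‖² as n → ∞. -/

import Mathlib

open Filter

lemma riemann_sum_tendsto (f : ℝ → ℝ) (hf : Continuous f) :
    Tendsto (fun n : ℕ => ∑ r ∈ Finset.range n, f ((r + 1 : ℝ) / (n + 1)) * (1 / (n + 1 : ℝ)))
      atTop (nhds (∫ x in (0:ℝ)..1, f x)) := by
  rw [Metric.tendsto_atTop]
  intro ε hε
  obtain ⟨δ, hδ, hδf⟩ := Metric.uniformContinuousOn_iff.mp
    ((isCompact_Icc (a := (0:ℝ)) (b := 1)).uniformContinuousOn_of_continuous hf.continuousOn)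
    (ε/2) (by positivity)
  obtain ⟨M, hM⟩ := (isCompact_Icc (a := (0:ℝ)) (b := 1)).exists_bound_of_continuousOn
    hf.continuousOn
  have hM0 : 0 ≤ M := le_trans (norm_nonneg _) (hM 0 (by norm_num))
  have h1 : Tendsto (fun n : ℕ => (1:ℝ)/(n+1)) atTop (nhds 0) :=
    tendsto_one_div_add_atTop_nhds_zero_nat
  have h2 : ∀ᶠ n : ℕ in atTop, (1:ℝ)/(n+1) < δ := h1.eventually (gt_mem_nhds hδ)
  have h3 : ∀ᶠ n : ℕ in atTop, M * ((1:ℝ)/(n+1)) < ε/2 := by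
    have := h1.const_mul M
    rw [mul_zero] at this
    exact this.eventually (gt_mem_nhds (by positivity))
  obtain ⟨N, hN⟩ := (h2.and h3).exists_forall_of_atTop
  refine ⟨N, fun n hn => ?_⟩
  obtain ⟨hδn, hMn⟩ := hN n hn
  have hnp : (0:ℝ) < n + 1 := by positivity
  set Δ : ℝ := (1:ℝ)/(n+1) with hΔ
  have hΔ0 : 0 < Δ := by positivity
  set a : ℕ → ℝ := fun r => r / (n + 1) with ha
  have hint : ∀ u v : ℝ, IntervalIntegrable f MeasureTheory.volume u v :=
    fun u v => hf.intervalIntegrable u v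
  have hmem : ∀ r : ℕ, r ≤ n + 1 → a r ∈ Set.Icc (0:ℝ) 1 := by
    intro r hr
    constructor
    · exact div_nonneg (Nat.cast_nonneg r) hnp.le
    · rw [div_le_one hnp]
      exact_mod_cast hr
  have hstep : ∀ r : ℕ, a (r + 1) - a r = Δ := by
    intro r
    simp only [ha, hΔ]
    push_cast
    ring
  have hsplit : (∫ x in (0:ℝ)..1, f x)
      = (∑ r ∈ Finset.range n, ∫ x in a r..a (r+1), f x) + ∫ x in a n..1, f x := by
    rw [intervalIntegral.sum_integral_adjacent_intervals (fun k _ => hint _ _)]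
    have h0 : a 0 = 0 := by simp [ha]
    rw [h0, intervalIntegral.integral_add_adjacent_intervals (hint _ _) (hint _ _)]
  rw [Real.dist_eq, hsplit]
  have key : ∀ r ∈ Finset.range n,
      |f ((r + 1 : ℝ) / (n + 1)) * Δ - ∫ x in a r..a (r+1), f x| ≤ (ε/2) * Δ := by
    intro r hr
    rw [Finset.mem_range] at hr
    have hx : ((r:ℝ) + 1) / (n + 1) = a (r+1) := by push_cast [ha]; ring_nf
    have hconst : f ((r + 1 : ℝ) / (n + 1)) * Δ = ∫ _x in a r..a (r+1), f ((r + 1 : ℝ) / (n + 1)) := by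
      rw [intervalIntegral.integral_const, hstep, smul_eq_mul, mul_comm]
    rw [hconst, ← intervalIntegral.integral_sub (by exact intervalIntegrable_const) (hint _ _)]
    have hle : a r ≤ a (r + 1) := by
      simp only [ha]
      push_cast
      gcongr
      linarith
    have hb : ∀ x ∈ Set.uIoc (a r) (a (r+1)), ‖f ((r + 1 : ℝ) / (n + 1)) - f x‖ ≤ ε/2 := by
      intro x hxm
      rw [Set.uIoc_of_le hle] at hxm
      have hxI : x ∈ Set.Icc (0:ℝ) 1 := by
        constructor
        · exact le_trans (hmem r (by omega)).1 hxm.1.le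
        · exact le_trans hxm.2 (hmem (r+1) (by omega)).2
      have hyI : ((r:ℝ) + 1) / (n + 1) ∈ Set.Icc (0:ℝ) 1 := by rw [hx]; exact hmem (r+1) (by omega)
      have hdist : dist ((r + 1 : ℝ) / (n + 1)) x < δ := by
        rw [Real.dist_eq, hx, abs_of_nonneg (by linarith [hxm.2])]
        have := hstep r
        have := hxm.1
        linarith
      exact le_of_lt (hδf _ hyI _ hxI hdist)
    calc ‖∫ x in a r..a (r+1), (f ((r + 1 : ℝ) / (n + 1)) - f x)‖
        ≤ (ε/2) * |a (r+1) - a r| := intervalIntegral.norm_integral_le_of_norm_le_const hb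
      _ = (ε/2) * Δ := by rw [hstep, abs_of_pos hΔ0]
  have tail : |∫ x in a n..1, f x| ≤ M * Δ := by
    have hle : a n ≤ 1 := (hmem n (by omega)).2
    have hb : ∀ x ∈ Set.uIoc (a n) 1, ‖f x‖ ≤ M := by
      intro x hxm
      rw [Set.uIoc_of_le hle] at hxm
      exact hM x ⟨le_trans (hmem n (by omega)).1 hxm.1.le, hxm.2⟩
    calc ‖∫ x in a n..1, f x‖ ≤ M * |1 - a n| := intervalIntegral.norm_integral_le_of_norm_le_const hb
      _ = M * Δ := by
          congr 1
          rw [abs_of_nonneg (by linarith)]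
          simp only [ha, hΔ]
          field_simp
          ring
  calc |(∑ r ∈ Finset.range n, f ((r + 1 : ℝ) / (n + 1)) * (1 / (n + 1 : ℝ)))
        - ((∑ r ∈ Finset.range n, ∫ x in a r..a (r+1), f x) + ∫ x in a n..1, f x)|
      = |(∑ r ∈ Finset.range n, (f ((r + 1 : ℝ) / (n + 1)) * Δ - ∫ x in a r..a (r+1), f x))
          - ∫ x in a n..1, f x| := by rw [Finset.sum_sub_distrib, hΔ]; congr 1; ring
    _ ≤ |∑ r ∈ Finset.range n, (f ((r + 1 : ℝ) / (n + 1)) * Δ - ∫ x in a r..a (r+1), f x)|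
          + |∫ x in a n..1, f x| := abs_sub _ _
    _ ≤ (∑ r ∈ Finset.range n, |f ((r + 1 : ℝ) / (n + 1)) * Δ - ∫ x in a r..a (r+1), f x|)
          + M * Δ := add_le_add (Finset.abs_sum_le_sum_abs _ _) tail
    _ ≤ (∑ _r ∈ Finset.range n, (ε/2) * Δ) + M * Δ := by
          gcongr with r hr
          exact key r hr
    _ = (n : ℝ) * ((ε/2) * Δ) + M * Δ := by rw [Finset.sum_const, Finset.card_range]; simp
    _ ≤ (ε/2) + M * Δ := by
          have : (n : ℝ) * Δ ≤ 1 := by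
            rw [hΔ, mul_one_div, div_le_one hnp]
            linarith
          nlinarith
    _ < ε := by rw [hΔ] at hMn ⊢; linarith

/-- For continuous orthonormal functions `e₁, …, e_k` in `L²[0,1]` and any `α ∈ ℝ^k`,
`αᵀ Uₙ Uₙᵀ α → ‖α‖²` as `n → ∞`, where `Uₙ` has entries `√(Δx) e_j(i/(n+1))`. -/
theorem stmt_4 (k : ℕ) (e : Fin k → ℝ → ℝ)
    (hcont : ∀ i, ContinuousOn (e i) (Set.Icc (0:ℝ) 1))
    (horth : ∀ i j, (∫ x in (0:ℝ)..1, e i x * e j x) = if i = j then (1:ℝ) else 0)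
    (α : Fin k → ℝ) :
    Tendsto
      (fun n : ℕ => ∑ i : Fin k, ∑ j : Fin k, α i * α j *
        (∑ r ∈ Finset.range n,
          e i ((r + 1 : ℝ) / (n + 1)) * e j ((r + 1 : ℝ) / (n + 1)) * (1 / (n + 1 : ℝ))))
      atTop (nhds (∑ i : Fin k, (α i) ^ 2)) := by
  -- continuous extensions of the `e i`
  set E : Fin k → ℝ → ℝ := fun i => Set.IccExtend (by norm_num : (0:ℝ) ≤ 1)
    ((Set.Icc (0:ℝ) 1).restrict (e i)) with hE
  have hEc : ∀ i, Continuous (E i) := fun i => ((hcont i).restrict).Icc_extend'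
  have hEeq : ∀ i, ∀ x ∈ Set.Icc (0:ℝ) 1, E i x = e i x := by
    intro i x hx
    simp [hE, Set.IccExtend_of_mem _ _ hx]
    rfl
  -- the function whose Riemann sums we take
  set g : ℝ → ℝ := fun x => (∑ i : Fin k, α i * E i x) ^ 2 with hg
  have hgc : Continuous g := by
    apply Continuous.pow
    exact continuous_finset_sum _ fun i _ => (continuous_const.mul (hEc i))
  have hmem : ∀ (n r : ℕ), r < n → ((r:ℝ) + 1) / (n + 1) ∈ Set.Icc (0:ℝ) 1 := by
    intro n r hr
    have hnp : (0:ℝ) < n + 1 := by positivity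
    constructor
    · positivity
    · rw [div_le_one hnp]
      have : (r:ℝ) + 1 ≤ (n:ℝ) := by exact_mod_cast hr
      linarith
  -- integral of g equals ∑ αᵢ²
  have hI : (∫ x in (0:ℝ)..1, g x) = ∑ i : Fin k, (α i) ^ 2 := by
    have hgeq : Set.EqOn g (fun x => ∑ i : Fin k, ∑ j : Fin k,
        (α i * α j) * (e i x * e j x)) (Set.uIcc (0:ℝ) 1) := by
      intro x hx
      rw [Set.uIcc_of_le (by norm_num)] at hx
      simp only [hg, sq, Finset.sum_mul_sum]
      refine Finset.sum_congr rfl fun i _ => Finset.sum_congr rfl fun j _ => ?_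
      rw [hEeq i x hx, hEeq j x hx]; ring
    rw [intervalIntegral.integral_congr hgeq]
    rw [intervalIntegral.integral_finset_sum]
    · have : ∀ i : Fin k, (∫ x in (0:ℝ)..1, ∑ j : Fin k, (α i * α j) * (e i x * e j x))
          = (α i)^2 := by
        intro i
        rw [intervalIntegral.integral_finset_sum]
        · rw [Finset.sum_eq_single i]
          · rw [intervalIntegral.integral_const_mul, horth i i, if_pos rfl]; ring
          · intro j _ hj
            rw [intervalIntegral.integral_const_mul, horth i j, if_neg (Ne.symm hj), mul_zero]
          · intro h; exact absurd (Finset.mem_univ i) h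
        · intro j _
          apply IntervalIntegrable.const_mul
          apply ContinuousOn.intervalIntegrable
          rw [Set.uIcc_of_le (by norm_num)]
          exact (hcont i).mul (hcont j)
      exact Finset.sum_congr rfl fun i _ => this i
    · intro i _
      apply ContinuousOn.intervalIntegrable
      apply continuousOn_finset_sum
      intro j _
      rw [Set.uIcc_of_le (by norm_num)]
      exact (continuousOn_const.mul ((hcont i).mul (hcont j)))
  -- the given sequence is the Riemann sum of g
  have hseq : ∀ n : ℕ, (∑ i : Fin k, ∑ j : Fin k, α i * α j *
        (∑ r ∈ Finset.range n,
          e i ((r + 1 : ℝ) / (n + 1)) * e j ((r + 1 : ℝ) / (n + 1)) * (1 / (n + 1 : ℝ))))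
      = ∑ r ∈ Finset.range n, g ((r + 1 : ℝ) / (n + 1)) * (1 / (n + 1 : ℝ)) := by
    intro n
    have hgpt : ∀ r ∈ Finset.range n, g ((r + 1 : ℝ) / (n + 1)) * (1 / (n + 1 : ℝ))
        = ∑ i : Fin k, ∑ j : Fin k, α i * α j *
          (e i ((r + 1 : ℝ) / (n + 1)) * e j ((r + 1 : ℝ) / (n + 1)) * (1 / (n + 1 : ℝ))) := by
      intro r hr
      rw [Finset.mem_range] at hr
      have hx := hmem n r hr
      simp only [hg, sq, Finset.sum_mul_sum, Finset.sum_mul, Finset.mul_sum]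
      refine Finset.sum_congr rfl fun i _ => Finset.sum_congr rfl fun j _ => ?_
      rw [hEeq i _ hx, hEeq j _ hx]; ring
    calc ∑ i : Fin k, ∑ j : Fin k, α i * α j *
          (∑ r ∈ Finset.range n,
            e i ((r + 1 : ℝ) / (n + 1)) * e j ((r + 1 : ℝ) / (n + 1)) * (1 / (n + 1 : ℝ)))
        = ∑ i : Fin k, ∑ j : Fin k, ∑ r ∈ Finset.range n, α i * α j *
            (e i ((r + 1 : ℝ) / (n + 1)) * e j ((r + 1 : ℝ) / (n + 1)) * (1 / (n + 1 : ℝ))) := by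
          simp only [Finset.mul_sum]
      _ = ∑ i : Fin k, ∑ r ∈ Finset.range n, ∑ j : Fin k, α i * α j *
            (e i ((r + 1 : ℝ) / (n + 1)) * e j ((r + 1 : ℝ) / (n + 1)) * (1 / (n + 1 : ℝ))) :=
          Finset.sum_congr rfl fun i _ => Finset.sum_comm 
      _ = ∑ r ∈ Finset.range n, ∑ i : Fin k, ∑ j : Fin k, α i * α j *
            (e i ((r + 1 : ℝ) / (n + 1)) * e j ((r + 1 : ℝ) / (n + 1)) * (1 / (n + 1 : ℝ))) :=
          Finset.sum_comm
      _ = ∑ r ∈ Finset.range n, g ((r + 1 : ℝ) / (n + 1)) * (1 / (n + 1 : ℝ)) :=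
          (Finset.sum_congr rfl hgpt).symm
  rw [← hI]
  exact (riemann_sum_tendsto g hgc).congr fun n => (hseq n).symm
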